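/- Let G be a graph on n vertices and φ an all-pair unit-demand multicommodity flow on G (for every pair of distinct vertices x,y, the total weight of x–y paths is 1). Then the edge-expansion satisfies h(G) ≥ n/(2·cng(φ)), where cng(φ) is the maximum over edges e of the total flow through e. -/

import Mathlib

open Finset

/-- Theorem 2.5: if `φ` is an all-pair unit-demand multicommodity flow on a graph `G`
on `n` vertices whose edge congestions are all at most `C`, then the edge-expansion
of `G` is at least `n / (2C)`. -/
theorem stmt_1 {V : Type*} [Fintype V] [DecidableEq V] (G : SimpleGraph V) [DecidableRel G.Adj]
    (φ : ∀ x y : V, G.Path x y → ℝ)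
    (hnonneg : ∀ x y p, 0 ≤ φ x y p)
    (hflow : ∀ x y : V, x ≠ y → ∑ p : G.Path x y, φ x y p = 1)
    (C : ℝ)
    (hC : ∀ e : Sym2 V, e ∈ G.edgeFinset →
      ∑ x : V, ∑ y : V, ∑ p : G.Path x y,
        (if e ∈ (p : G.Walk x y).edges then φ x y p else 0) ≤ C)
    (U : Finset V) (hU : U.Nonempty) (hU2 : 2 * U.card ≤ Fintype.card V) :
    (Fintype.card V : ℝ) / (2 * C) ≤
      ((univ.filter (fun q : V × V => G.Adj q.1 q.2 ∧ q.1 ∈ U ∧ q.2 ∉ U)).card : ℝ)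
        / U.card := by
  classical
  set n := Fintype.card V with hn
  set D : Finset (V × V) := univ.filter (fun q : V × V => G.Adj q.1 q.2 ∧ q.1 ∈ U ∧ q.2 ∉ U)
    with hD
  set B : Finset (Sym2 V) := D.image (fun q => s(q.1, q.2)) with hB
  have hnn : ∀ (x y : V) (p : G.Path x y) (e : Sym2 V),
      0 ≤ (if e ∈ (p : G.Walk x y).edges then φ x y p else 0) := by
    intro x y p e
    split_ifs
    · exact hnonneg _ _ _
    · exact le_rfl
  have hBcard : B.card = D.card := by
    apply Finset.card_image_of_injOn
    intro a ha b hb hab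
    simp only [Finset.mem_coe, hD, mem_filter] at ha hb
    rw [Sym2.eq_iff] at hab
    rcases hab with ⟨h1, h2⟩ | ⟨h1, h2⟩
    · exact Prod.ext h1 h2
    · exact absurd (h1 ▸ ha.2.2.1) hb.2.2.2
  have hBedge : ∀ e ∈ B, e ∈ G.edgeFinset := by
    intro e he
    simp only [hB, mem_image] at he
    obtain ⟨q, hq, rfl⟩ := he
    simp only [hD, mem_filter] at hq
    exact SimpleGraph.mem_edgeFinset.2 hq.2.1
  -- there exist x ∈ U, y ∉ U
  obtain ⟨x0, hx0⟩ := hU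
  have hUcompl : ∃ y, y ∉ U := by
    by_contra h
    push_neg at h
    have hUU : U = univ := Finset.eq_univ_of_forall h
    have h1 : U.card = n := by rw [hUU, Finset.card_univ]
    have h2 : 1 ≤ U.card := Finset.card_pos.2 ⟨x0, hx0⟩
    omega
  obtain ⟨y0, hy0⟩ := hUcompl
  have hxy0 : x0 ≠ y0 := fun h => hy0 (h ▸ hx0)
  -- C > 0
  have hCpos : 0 < C := by
    have h1 : ∑ p : G.Path x0 y0, φ x0 y0 p = 1 := hflow x0 y0 hxy0
    have : ∃ p : G.Path x0 y0, 0 < φ x0 y0 p := by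
      by_contra h
      push_neg at h
      have : ∑ p : G.Path x0 y0, φ x0 y0 p = 0 := by
        apply Finset.sum_eq_zero
        intro p _
        exact le_antisymm (h p) (hnonneg _ _ p)
      rw [this] at h1; norm_num at h1
    obtain ⟨p, hp⟩ := this
    obtain ⟨d, hd, hdU, hdU'⟩ := (p : G.Walk x0 y0).exists_boundary_dart (↑U) hx0 hy0
    have hde : d.edge ∈ (p : G.Walk x0 y0).edges := by
      rw [SimpleGraph.Walk.edges]
      exact List.mem_map_of_mem hd
    have heF : d.edge ∈ G.edgeFinset := by
      rw [SimpleGraph.mem_edgeFinset]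
      exact d.edge_mem
    refine lt_of_lt_of_le ?_ (hC d.edge heF)
    have step1 : φ x0 y0 p ≤ ∑ q : G.Path x0 y0,
        (if d.edge ∈ (q : G.Walk x0 y0).edges then φ x0 y0 q else 0) := by
      have := Finset.single_le_sum (f := fun q : G.Path x0 y0 =>
        (if d.edge ∈ (q : G.Walk x0 y0).edges then φ x0 y0 q else 0))
        (fun q _ => hnn _ _ q _) (Finset.mem_univ p)
      simpa [hde] using this
    have step2 : ∑ q : G.Path x0 y0,
        (if d.edge ∈ (q : G.Walk x0 y0).edges then φ x0 y0 q else 0) ≤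
        ∑ x : V, ∑ y : V, ∑ q : G.Path x y,
          (if d.edge ∈ (q : G.Walk x y).edges then φ x y q else 0) := by
      have hy : ∑ q : G.Path x0 y0,
          (if d.edge ∈ (q : G.Walk x0 y0).edges then φ x0 y0 q else 0) ≤
          ∑ y : V, ∑ q : G.Path x0 y,
            (if d.edge ∈ (q : G.Walk x0 y).edges then φ x0 y q else 0) := by
        have := Finset.single_le_sum (f := fun y : V => ∑ q : G.Path x0 y,
          (if d.edge ∈ (q : G.Walk x0 y).edges then φ x0 y q else 0))
          (fun y _ => Finset.sum_nonneg fun q _ => hnn _ _ q _) (Finset.mem_univ y0)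
        simpa using this
      refine hy.trans ?_
      have := Finset.single_le_sum (f := fun x : V => ∑ y : V, ∑ q : G.Path x y,
        (if d.edge ∈ (q : G.Walk x y).edges then φ x y q else 0))
        (fun x _ => Finset.sum_nonneg fun y _ => Finset.sum_nonneg fun q _ => hnn _ _ q _)
        (Finset.mem_univ x0)
      simpa using this
    exact lt_of_lt_of_le hp (step1.trans step2)
  -- main counting inequality
  have hUc : U.card ≤ n := by
    simpa [hn] using Finset.card_le_univ U
  have hcompl : (Uᶜ : Finset V).card = n - U.card := by
    simp [Finset.card_compl, hn]
  have key : (U.card : ℝ) * ((n : ℝ) - U.card) ≤ (D.card : ℝ) * C := by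
    have hsum : (U.card : ℝ) * ((n : ℝ) - U.card) =
        ∑ x ∈ U, ∑ y ∈ Uᶜ, ∑ p : G.Path x y, φ x y p := by
      have e1 : ∑ x ∈ U, ∑ y ∈ Uᶜ, ∑ p : G.Path x y, φ x y p
          = ∑ x ∈ U, ∑ y ∈ Uᶜ, (1 : ℝ) := by
        refine Finset.sum_congr rfl fun x hx => Finset.sum_congr rfl fun y hy => ?_
        apply hflow
        intro h
        exact (Finset.mem_compl.1 hy) (h ▸ hx)
      rw [e1, Finset.sum_const, Finset.sum_const, hcompl, nsmul_eq_mul, nsmul_eq_mul]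
      push_cast [Nat.cast_sub hUc]
      ring
    rw [hsum]
    have step : ∀ x ∈ U, ∀ y ∈ Uᶜ, ∀ p : G.Path x y,
        φ x y p ≤ ∑ e ∈ B, (if e ∈ (p : G.Walk x y).edges then φ x y p else 0) := by
      intro x hx y hy p
      obtain ⟨d, hd, hdU, hdU'⟩ := (p : G.Walk x y).exists_boundary_dart (↑U) hx
        (Finset.mem_compl.1 hy)
      have hde : d.edge ∈ (p : G.Walk x y).edges := by
        rw [SimpleGraph.Walk.edges]
        exact List.mem_map_of_mem hd
      have hdB : d.edge ∈ B := by
        simp only [hB, mem_image]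
        refine ⟨(d.fst, d.snd), ?_, ?_⟩
        · simp only [hD, mem_filter]
          exact ⟨Finset.mem_univ _, d.adj, hdU, hdU'⟩
        · rfl
      have := Finset.single_le_sum (f := fun e : Sym2 V =>
        (if e ∈ (p : G.Walk x y).edges then φ x y p else 0))
        (fun e _ => hnn _ _ p e) hdB
      simpa [hde] using this
    calc ∑ x ∈ U, ∑ y ∈ Uᶜ, ∑ p : G.Path x y, φ x y p
        ≤ ∑ x ∈ U, ∑ y ∈ Uᶜ, ∑ p : G.Path x y,
            ∑ e ∈ B, (if e ∈ (p : G.Walk x y).edges then φ x y p else 0) := by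
          refine Finset.sum_le_sum fun x hx => Finset.sum_le_sum fun y hy =>
            Finset.sum_le_sum fun p _ => step x hx y hy p
      _ = ∑ e ∈ B, ∑ x ∈ U, ∑ y ∈ Uᶜ, ∑ p : G.Path x y,
            (if e ∈ (p : G.Walk x y).edges then φ x y p else 0) := by
          rw [Finset.sum_congr rfl fun x (_ : x ∈ U) => Finset.sum_congr rfl
            fun y (_ : y ∈ Uᶜ) => Finset.sum_comm]
          rw [Finset.sum_congr rfl fun x (_ : x ∈ U) => Finset.sum_comm]
          rw [Finset.sum_comm]
      _ ≤ ∑ e ∈ B, ∑ x : V, ∑ y : V, ∑ p : G.Path x y,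
            (if e ∈ (p : G.Walk x y).edges then φ x y p else 0) := by
          refine Finset.sum_le_sum fun e _ => ?_
          refine le_trans (Finset.sum_le_sum fun x _ =>
            Finset.sum_le_sum_of_subset_of_nonneg (Finset.subset_univ _)
              (fun y _ _ => Finset.sum_nonneg fun p _ => hnn _ _ p e)) ?_
          exact Finset.sum_le_sum_of_subset_of_nonneg (Finset.subset_univ _)
            (fun x _ _ => Finset.sum_nonneg fun y _ => Finset.sum_nonneg fun p _ => hnn _ _ p e)
      _ ≤ ∑ e ∈ B, C := Finset.sum_le_sum fun e he => hC e (hBedge e he)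
      _ = (B.card : ℝ) * C := by rw [Finset.sum_const, nsmul_eq_mul]
      _ = (D.card : ℝ) * C := by rw [hBcard]
  -- finish
  have hUpos : (0 : ℝ) < U.card := by
    exact_mod_cast Finset.card_pos.2 ⟨x0, hx0⟩
  rw [div_le_div_iff₀ (by positivity) hUpos]
  have h1 : (n : ℝ) - U.card ≥ (n : ℝ) / 2 := by
    have : (2 : ℝ) * U.card ≤ n := by exact_mod_cast hU2
    linarith
  have h2 : (U.card : ℝ) * ((n : ℝ) / 2) ≤ (D.card : ℝ) * C := by
    calc (U.card : ℝ) * ((n : ℝ) / 2) ≤ (U.card : ℝ) * ((n : ℝ) - U.card) := by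
          apply mul_le_mul_of_nonneg_left h1 hUpos.le
      _ ≤ (D.card : ℝ) * C := key
  nlinarith [h2]
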